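/- Let u : Q_{1/2} → ℝ (where Q_r = B_r × (-r², 0] ⊂ ℝⁿ × ℝ), C > 0, α, β ∈ (0,1], and suppose: (i) |u(y,t) - u(x,t) - Du(x,t)·(y-x)| ≤ C|x-y|^{1+α} for all (x,t),(y,t) ∈ Q_{1/2}, where Du(·,t) is the spatial gradient; (ii) |u(x,t) - u(x,s)| ≤ C|t-s|^β for all (x,t),(x,s) ∈ Q_{1/2}. Then there is a constant C' (depending on C, α, β, n) such that |Du(x,t) - Du(x,s)| ≤ C'|t-s|^{αβ/(1+α)} for all (x,t),(x,s) ∈ Q_{1/4} with |t-s| ≤ 1. -/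

import Mathlib

open scoped BigOperators RealInnerProductSpace

/-- Mixed space-time regularity: if `u` is `C^{1,α}` in space (uniformly in time) and
`C^β` in time (uniformly in space) on `Q_{1/2}`, then its spatial gradient is
`(αβ/(1+α))`-Hölder in time on `Q_{1/4}`. -/
theorem stmt6 (n : ℕ) (u : EuclideanSpace ℝ (Fin n) → ℝ → ℝ)
    (Du : EuclideanSpace ℝ (Fin n) → ℝ → EuclideanSpace ℝ (Fin n))
    (C α β : ℝ) (hC : 0 < C) (hα : α ∈ Set.Ioc (0 : ℝ) 1) (hβ : β ∈ Set.Ioc (0 : ℝ) 1)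
    (h1 : ∀ (x y : EuclideanSpace ℝ (Fin n)) (t : ℝ),
      ‖x‖ < 1 / 2 → ‖y‖ < 1 / 2 → t ∈ Set.Ioc (-((1 : ℝ) / 2) ^ 2) 0 →
      |u y t - u x t - ⟪Du x t, y - x⟫| ≤ C * ‖x - y‖ ^ (1 + α))
    (h2 : ∀ (x : EuclideanSpace ℝ (Fin n)) (t s : ℝ),
      ‖x‖ < 1 / 2 → t ∈ Set.Ioc (-((1 : ℝ) / 2) ^ 2) 0 → s ∈ Set.Ioc (-((1 : ℝ) / 2) ^ 2) 0 →
      |u x t - u x s| ≤ C * |t - s| ^ β) :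
    ∃ C' : ℝ, 0 < C' ∧ ∀ (x : EuclideanSpace ℝ (Fin n)) (t s : ℝ),
      ‖x‖ < 1 / 4 → t ∈ Set.Ioc (-((1 : ℝ) / 4) ^ 2) 0 → s ∈ Set.Ioc (-((1 : ℝ) / 4) ^ 2) 0 →
      |t - s| ≤ 1 →
      ‖Du x t - Du x s‖ ≤ C' * |t - s| ^ (α * β / (1 + α)) := by
  obtain ⟨hα0, hα1⟩ := hα
  obtain ⟨hβ0, hβ1⟩ := hβ
  have h1α : (0:ℝ) < 1 + α := by linarith
  set E := α * β / (1 + α) with hE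
  have hE0 : 0 < E := by positivity
  refine ⟨10 * C, by positivity, ?_⟩
  intro x t s hx ht hs hts
  set d := |t - s| with hd
  have hd0 : (0:ℝ) ≤ d := abs_nonneg _
  have ht' : t ∈ Set.Ioc (-((1 : ℝ) / 2) ^ 2) 0 := ⟨by nlinarith [ht.1], ht.2⟩
  have hs' : s ∈ Set.Ioc (-((1 : ℝ) / 2) ^ 2) 0 := ⟨by nlinarith [hs.1], hs.2⟩
  have hx2 : ‖x‖ < 1 / 2 := by linarith
  rcases eq_or_lt_of_le hd0 with hdz | hdpos
  · have hts0 : t = s := by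
      have : t - s = 0 := abs_eq_zero.mp hdz.symm
      linarith
    rw [hts0, sub_self, norm_zero]
    positivity
  · set v := Du x t - Du x s with hv
    rcases eq_or_ne v (0 : EuclideanSpace ℝ (Fin n)) with hv0 | hv0
    · rw [hv0, norm_zero]
      positivity
    · set ρ : ℝ := d ^ (β / (1 + α)) / 4 with hρ
      have hρpos : 0 < ρ := by positivity
      have hdle1 : d ^ (β / (1 + α)) ≤ 1 := Real.rpow_le_one hd0 hts (by positivity)
      have hρle : ρ ≤ 1 / 4 := by rw [hρ]; linarith
      set w : EuclideanSpace ℝ (Fin n) := ‖v‖⁻¹ • v with hw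
      have hwn : ‖w‖ = 1 := norm_smul_inv_norm hv0
      set y : EuclideanSpace ℝ (Fin n) := x + ρ • w with hy
      have hyx : y - x = ρ • w := by rw [hy]; abel
      have hxy : ‖x - y‖ = ρ := by
        rw [show x - y = -(ρ • w) by rw [hy]; abel, norm_neg, norm_smul, hwn,
          Real.norm_eq_abs, abs_of_pos hρpos, mul_one]
      have hy2 : ‖y‖ < 1 / 2 := by
        calc ‖y‖ ≤ ‖x‖ + ‖ρ • w‖ := norm_add_le _ _
        _ = ‖x‖ + ρ := by
            rw [norm_smul, hwn, Real.norm_eq_abs, abs_of_pos hρpos, mul_one]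
        _ < 1 / 2 := by linarith
      have hinner : ⟪v, y - x⟫ = ρ * ‖v‖ := by
        rw [hyx, real_inner_smul_right, real_inner_smul_right,
          real_inner_self_eq_norm_sq]
        field_simp [norm_ne_zero_iff.mpr hv0]
      have hA := h1 x y t hx2 hy2 ht'
      have hB := h1 x y s hx2 hy2 hs'
      have hC1 := h2 y t s hy2 ht' hs'
      have hC2 := h2 x t s hx2 ht' hs'
      rw [hxy] at hA hB
      have hsplit : ⟪v, y - x⟫ = ⟪Du x t, y - x⟫ - ⟪Du x s, y - x⟫ := by
        rw [hv, inner_sub_left]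
      have key : ρ * ‖v‖ ≤ 2 * C * ρ ^ (1 + α) + 2 * C * d ^ β := by
        have e1 := abs_le.mp hA
        have e2 := abs_le.mp hB
        have e3 := abs_le.mp hC1
        have e4 := abs_le.mp hC2
        rw [← hinner, hsplit]
        linarith [e1.1, e1.2, e2.1, e2.2, e3.1, e3.2, e4.1, e4.2]
      have hrpow1 : ρ ^ (1 + α) = ρ * ρ ^ α := by
        rw [Real.rpow_add hρpos, Real.rpow_one]
      have hdβ : d ^ β = (4 * ρ) * d ^ E := by
        rw [hρ]
        have hsum : β / (1 + α) + E = β := by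
          rw [hE]; field_simp
        have : d ^ β = d ^ (β / (1 + α)) * d ^ E := by
          rw [← Real.rpow_add hdpos, hsum]
        rw [this]; ring
      have hρα : ρ ^ α ≤ d ^ E := by
        have h1' : ρ ≤ d ^ (β / (1 + α)) := by
          rw [hρ]
          have : (0:ℝ) ≤ d ^ (β / (1 + α)) := by positivity
          linarith
        calc ρ ^ α ≤ (d ^ (β / (1 + α))) ^ α :=
              Real.rpow_le_rpow hρpos.le h1' hα0.le
        _ = d ^ E := by
            rw [← Real.rpow_mul hd0]
            congr 1
            ring
      have final : ‖v‖ ≤ 10 * C * d ^ E := by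
        have h10 : ρ * ‖v‖ ≤ ρ * (10 * C * d ^ E) := by
          calc ρ * ‖v‖ ≤ 2 * C * ρ ^ (1 + α) + 2 * C * d ^ β := key
          _ = ρ * (2 * C * ρ ^ α + 8 * C * d ^ E) := by rw [hrpow1, hdβ]; ring
          _ ≤ ρ * (10 * C * d ^ E) := by
              have h' := mul_le_mul_of_nonneg_left hρα hC.le
              gcongr
              linarith
        exact le_of_mul_le_mul_left h10 hρpos
      exact final
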